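/- Let O₁, O₀ be square-integrable real random variables and X a square-integrable random vector with nonsingular covariance Σ_X. Set β_j = Σ_X^{-1} Cov(X, O_j) for j = 0, 1, and let 0 < π < 1. Then π·Var(O₁ − X^T β₁) + (1−π)·Var(O₀ − X^T β₀) + (πβ₁ − (1−π)β₀)^T Σ_X (πβ₁ − (1−π)β₀) = π·Var(O₁) + (1−π)·Var(O₀) − π(1−π)(β₁+β₀)^T Σ_X (β₁+β₀). -/

import Mathlib

open MeasureTheory ProbabilityTheory Filter Matrix Set
open scoped BigOperators NNReal Topology ProbabilityTheory

noncomputable def evar {Ω : Type*} [MeasurableSpace Ω] (μ : Measure Ω) (f : Ω → ℝ) : ℝ :=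
  ∫ ω, (f ω - ∫ x, f x ∂μ) ^ 2 ∂μ

noncomputable def ecov {Ω : Type*} [MeasurableSpace Ω] (μ : Measure Ω) (f g : Ω → ℝ) : ℝ :=
  ∫ ω, (f ω - ∫ x, f x ∂μ) * (g ω - ∫ x, g x ∂μ) ∂μ

noncomputable def covVec {Ω : Type*} [MeasurableSpace Ω] (μ : Measure Ω) {d : ℕ}
    (X : Ω → Fin d → ℝ) (f : Ω → ℝ) : Fin d → ℝ :=
  fun k => ecov μ (fun ω => X ω k) f

noncomputable def covMat {Ω : Type*} [MeasurableSpace Ω] (μ : Measure Ω) {d : ℕ}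
    (X : Ω → Fin d → ℝ) : Matrix (Fin d) (Fin d) ℝ :=
  Matrix.of fun k l => ecov μ (fun ω => X ω k) (fun ω => X ω l)

section Aux

variable {Ω : Type*} [MeasurableSpace Ω] {μ : Measure Ω} [IsProbabilityMeasure μ]

lemma mul_int {f g : Ω → ℝ} (hf : MemLp f 2 μ) (hg : MemLp g 2 μ) :
    Integrable (fun ω => f ω * g ω) μ := by
  have h := L2.integrable_inner (𝕜 := ℝ) (hf.toLp f) (hg.toLp g)
  apply h.congr
  filter_upwards [hf.coeFn_toLp, hg.coeFn_toLp] with ω h1 h2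
  simp [h1, h2, RCLike.inner_apply, mul_comm]

lemma key {f : Ω → ℝ} (hf : MemLp f 2 μ) {d : ℕ} {X : Ω → Fin d → ℝ}
    (hX : ∀ k, MemLp (fun ω => X ω k) 2 μ) (β : Fin d → ℝ) :
    evar μ (fun ω => f ω - ∑ k, X ω k * β k)
      = evar μ f - 2 * (β ⬝ᵥ covVec μ X f) + β ⬝ᵥ (covMat μ X).mulVec β := by
  have hcf : MemLp (fun ω => f ω - ∫ x, f x ∂μ) 2 μ := hf.sub (memLp_const _)
  have hcX : ∀ k, MemLp (fun ω => X ω k - ∫ x, X x k ∂μ) 2 μ :=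
    fun k => (hX k).sub (memLp_const _)
  have hLi : ∀ k, Integrable (fun ω => X ω k * β k) μ :=
    fun k => ((hX k).integrable one_le_two).mul_const _
  have hIL : (∫ ω, ∑ k, X ω k * β k ∂μ) = ∑ k, (∫ x, X x k ∂μ) * β k := by
    rw [integral_finset_sum _ fun k _ => hLi k]
    exact Finset.sum_congr rfl fun k _ => integral_mul_const _ _
  have hab : ∀ k, Integrable
      (fun ω => (f ω - ∫ x, f x ∂μ) * (X ω k - ∫ x, X x k ∂μ) * β k) μ :=
    fun k => (mul_int hcf (hcX k)).mul_const _
  have hbb : ∀ k l, Integrable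
      (fun ω => (X ω k - ∫ x, X x k ∂μ) * (X ω l - ∫ x, X x l ∂μ) * (β k * β l)) μ :=
    fun k l => (mul_int (hcX k) (hcX l)).mul_const _
  have expand : evar μ (fun ω => f ω - ∑ k, X ω k * β k)
      = ∫ ω, ((f ω - ∫ x, f x ∂μ)^2
          - 2 * ∑ k, ((f ω - ∫ x, f x ∂μ) * (X ω k - ∫ x, X x k ∂μ) * β k)
          + ∑ k, ∑ l, ((X ω k - ∫ x, X x k ∂μ) * (X ω l - ∫ x, X x l ∂μ)
              * (β k * β l))) ∂μ := by
    unfold evar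
    refine integral_congr_ae (Eventually.of_forall fun ω => ?_)
    beta_reduce
    rw [integral_sub (hf.integrable one_le_two) (integrable_finset_sum _ fun k _ => hLi k),
      hIL]
    have h1 : f ω - ∑ k, X ω k * β k - ((∫ x, f x ∂μ) - ∑ k, (∫ x, X x k ∂μ) * β k)
        = (f ω - ∫ x, f x ∂μ) - ∑ k, ((X ω k - ∫ x, X x k ∂μ) * β k) := by
      rw [Finset.sum_congr rfl fun k _ => sub_mul (X ω k) (∫ x, X x k ∂μ) (β k),
        Finset.sum_sub_distrib]
      ring
    rw [h1, sub_sq, sq (∑ k, (X ω k - ∫ x, X x k ∂μ) * β k), Finset.sum_mul_sum]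
    rw [show 2 * (f ω - ∫ x, f x ∂μ) * ∑ k, (X ω k - ∫ x, X x k ∂μ) * β k
        = 2 * ∑ k, ((f ω - ∫ x, f x ∂μ) * (X ω k - ∫ x, X x k ∂μ) * β k) by
      rw [Finset.mul_sum, Finset.mul_sum]
      exact Finset.sum_congr rfl fun k _ => by ring]
    congr 1
    exact Finset.sum_congr rfl fun k _ => Finset.sum_congr rfl fun l _ => by ring
  have I12 : Integrable (fun ω => (f ω - ∫ x, f x ∂μ)^2
      - 2 * ∑ k, ((f ω - ∫ x, f x ∂μ) * (X ω k - ∫ x, X x k ∂μ) * β k)) μ := by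
    exact (hcf.integrable_sq).sub ((integrable_finset_sum _ fun k _ => hab k).const_mul 2)
  rw [expand, integral_add I12 (integrable_finset_sum _ fun k _ =>
      integrable_finset_sum _ fun l _ => hbb k l),
    integral_sub hcf.integrable_sq ((integrable_finset_sum _ fun k _ => hab k).const_mul 2),
    integral_const_mul, integral_finset_sum _ fun k _ => hab k,
    integral_finset_sum _ fun k _ => integrable_finset_sum _ fun l _ => hbb k l]
  have eB : (∑ k, ∫ ω, (f ω - ∫ x, f x ∂μ) * (X ω k - ∫ x, X x k ∂μ) * β k ∂μ)
      = β ⬝ᵥ covVec μ X f := by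
    simp only [dotProduct, covVec, ecov]
    refine Finset.sum_congr rfl fun k _ => ?_
    rw [integral_mul_const, mul_comm (β k)]
    congr 1
    exact integral_congr_ae (Eventually.of_forall fun ω => mul_comm _ _)
  have eC : (∑ k, ∫ ω, ∑ l, ((X ω k - ∫ x, X x k ∂μ) * (X ω l - ∫ x, X x l ∂μ)
        * (β k * β l)) ∂μ) = β ⬝ᵥ (covMat μ X).mulVec β := by
    simp only [dotProduct, Matrix.mulVec, covMat, Matrix.of_apply, ecov]
    refine Finset.sum_congr rfl fun k _ => ?_
    rw [integral_finset_sum _ fun l _ => hbb k l, Finset.mul_sum]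
    refine Finset.sum_congr rfl fun l _ => ?_
    rw [integral_mul_const]
    ring
  rw [eB, eC]
  rfl

lemma covMat_symm_dot {d : ℕ} (X : Ω → Fin d → ℝ) (u v : Fin d → ℝ) :
    u ⬝ᵥ (covMat μ X).mulVec v = v ⬝ᵥ (covMat μ X).mulVec u := by
  simp only [dotProduct, Matrix.mulVec, Finset.mul_sum, covMat, Matrix.of_apply, ecov]
  rw [Finset.sum_comm]
  refine Finset.sum_congr rfl fun k _ => Finset.sum_congr rfl fun l _ => ?_
  rw [integral_congr_ae (Eventually.of_forall fun ω =>
    mul_comm (X ω l - ∫ x, X x l ∂μ) (X ω k - ∫ x, X x k ∂μ))]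
  ring

end Aux

/-- variance decomposition identity for the adjusted statistic:
`π Var(O₁ - Xᵀβ₁) + (1-π) Var(O₀ - Xᵀβ₀) + (πβ₁-(1-π)β₀)ᵀ Σ_X (πβ₁-(1-π)β₀)
  = π Var(O₁) + (1-π) Var(O₀) - π(1-π)(β₁+β₀)ᵀ Σ_X (β₁+β₀)`. -/
theorem stmt2 {Ω : Type*} [MeasurableSpace Ω] (μ : Measure Ω) [IsProbabilityMeasure μ]
    {d : ℕ} (X : Ω → Fin d → ℝ) (O₀ O₁ : Ω → ℝ)
    (hX : MemLp X 2 μ) (hO₀ : MemLp O₀ 2 μ) (hO₁ : MemLp O₁ 2 μ)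
    (hSig : (covMat μ X).PosDef)
    (π : ℝ) (hπ : 0 < π) (hπ1 : π < 1)
    (β₀ β₁ : Fin d → ℝ)
    (hβ₀ : β₀ = (covMat μ X)⁻¹.mulVec (covVec μ X O₀))
    (hβ₁ : β₁ = (covMat μ X)⁻¹.mulVec (covVec μ X O₁)) :
    π * evar μ (fun ω => O₁ ω - ∑ k, X ω k * β₁ k)
      + (1 - π) * evar μ (fun ω => O₀ ω - ∑ k, X ω k * β₀ k)
      + (π • β₁ - (1 - π) • β₀) ⬝ᵥ (covMat μ X).mulVec (π • β₁ - (1 - π) • β₀)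
    = π * evar μ O₁ + (1 - π) * evar μ O₀
      - π * (1 - π) * ((β₁ + β₀) ⬝ᵥ (covMat μ X).mulVec (β₁ + β₀)) := by
  have hXk : ∀ k, MemLp (fun ω => X ω k) 2 μ := fun k =>
    (ContinuousLinearMap.proj (R := ℝ) (φ := fun _ : Fin d => ℝ) k).comp_memLp' hX
  have hdet : IsUnit (covMat μ X).det := hSig.det_pos.ne'.isUnit
  have hc₀ : (covMat μ X).mulVec β₀ = covVec μ X O₀ := by
    rw [hβ₀, Matrix.mulVec_mulVec, Matrix.mul_nonsing_inv _ hdet, Matrix.one_mulVec]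
  have hc₁ : (covMat μ X).mulVec β₁ = covVec μ X O₁ := by
    rw [hβ₁, Matrix.mulVec_mulVec, Matrix.mul_nonsing_inv _ hdet, Matrix.one_mulVec]
  have e₁ : evar μ (fun ω => O₁ ω - ∑ k, X ω k * β₁ k)
      = evar μ O₁ - β₁ ⬝ᵥ (covMat μ X).mulVec β₁ := by
    rw [key hO₁ hXk β₁, ← hc₁]; ring
  have e₀ : evar μ (fun ω => O₀ ω - ∑ k, X ω k * β₀ k)
      = evar μ O₀ - β₀ ⬝ᵥ (covMat μ X).mulVec β₀ := by
    rw [key hO₀ hXk β₀, ← hc₀]; ring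
  have hsymm : β₀ ⬝ᵥ (covMat μ X).mulVec β₁ = β₁ ⬝ᵥ (covMat μ X).mulVec β₀ :=
    covMat_symm_dot X β₀ β₁
  rw [e₁, e₀]
  simp only [Matrix.mulVec_add, Matrix.mulVec_sub, Matrix.mulVec_smul, dotProduct_add,
    dotProduct_sub, add_dotProduct, sub_dotProduct, smul_dotProduct, dotProduct_smul,
    smul_eq_mul]
  rw [hsymm]
  ring
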